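/- For the quadratic cost V(x) = ½⟨y - Ax, Γ⁻¹(y - Ax)⟩ + ½⟨x, Σ⁻¹x⟩ with A linear, the preconditioned gradient flow drift -C∇V(x) equals the EKS drift -∫⟨A(X'−X̄), A x − y⟩_Γ X' π(X')dX' − C Σ⁻¹ x whenever π has mean X̄ and covariance C, i.e. ∫⟨A(X'−X̄), Ax − y⟩_Γ X' π(X')dX' = C Aᵀ Γ⁻¹(Ax − y). -/

import Mathlib

open Matrix MeasureTheory

attribute [local instance] Matrix.frobeniusNormedAddCommGroup Matrix.frobeniusNormedSpace

private lemma vecMulVec_mulVec_aux {d : ℕ} (u a b : Fin d → ℝ) :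
    vecMulVec a b *ᵥ u = (b ⬝ᵥ u) • a := by
  ext i
  simp only [mulVec, dotProduct, vecMulVec_apply, Pi.smul_apply, smul_eq_mul, Finset.sum_mul]
  exact Finset.sum_congr rfl fun j _ => by ring

/-- For a linear forward map `A`, the EKS drift term equals the covariance-
preconditioned Langevin drift: if `π` has mean `X̄` and covariance `C`, then
`∫⟨A(X'−X̄), Ax − y⟩_Γ X' π(X')dX' = C Aᵀ Γ⁻¹(Ax − y)`. -/
theorem stmt_14 {d K : ℕ} (A : Matrix (Fin K) (Fin d) ℝ)
    (Γ : Matrix (Fin K) (Fin K) ℝ) (hΓ : Γ.PosDef) (y : Fin K → ℝ)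
    (π : (Fin d → ℝ) → ℝ) (hπ : ∀ x, 0 ≤ π x) (hπ1 : (∫ x', π x') = 1)
    (h1 : Integrable fun x' => π x' • x')
    (h2 : @Integrable (Matrix (Fin d) (Fin d) ℝ) _ SeminormedAddGroup.toContinuousENorm _ _
      (fun x' : Fin d → ℝ => π x' • vecMulVec x' x') volume)
    (Xbar : Fin d → ℝ) (hXbar : Xbar = ∫ x', π x' • x')
    (C : Matrix (Fin d) (Fin d) ℝ)
    (hC : C = ∫ x', π x' • vecMulVec (x' - Xbar) (x' - Xbar)) :
    ∀ x : Fin d → ℝ,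
      (∫ x', (π x' * ((A *ᵥ (x' - Xbar)) ⬝ᵥ (Γ⁻¹ *ᵥ (A *ᵥ x - y)))) • x')
        = (C * Aᵀ * Γ⁻¹) *ᵥ (A *ᵥ x - y) := by
  have hπint : Integrable π := by
    by_contra h
    rw [integral_undef h] at hπ1
    exact one_ne_zero hπ1.symm
  intro x
  set u : Fin d → ℝ := Aᵀ *ᵥ (Γ⁻¹ *ᵥ (A *ᵥ x - y)) with hu
  -- continuous linear maps
  let L : Matrix (Fin d) (Fin d) ℝ →L[ℝ] (Fin d → ℝ) := LinearMap.toContinuousLinearMap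
    { toFun := fun M => M *ᵥ u
      map_add' := fun M N => Matrix.add_mulVec M N u
      map_smul' := fun c M => by simp [Matrix.smul_mulVec] }
  have hL : ∀ M : Matrix (Fin d) (Fin d) ℝ, L M = M *ᵥ u := fun M => rfl
  let D : (Fin d → ℝ) →L[ℝ] ℝ := LinearMap.toContinuousLinearMap
    { toFun := fun v => v ⬝ᵥ u
      map_add' := fun v w => add_dotProduct v w u
      map_smul' := fun c v => smul_dotProduct c v u }
  have hD : ∀ v : Fin d → ℝ, D v = v ⬝ᵥ u := fun v => rfl
  let T1 : (Fin d → ℝ) →L[ℝ] Matrix (Fin d) (Fin d) ℝ := LinearMap.toContinuousLinearMap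
    { toFun := fun v => vecMulVec v Xbar
      map_add' := fun v w => by ext i j; simp [vecMulVec_apply]; ring
      map_smul' := fun c v => by ext i j; simp [vecMulVec_apply]; ring }
  let T2 : (Fin d → ℝ) →L[ℝ] Matrix (Fin d) (Fin d) ℝ := LinearMap.toContinuousLinearMap
    { toFun := fun v => vecMulVec Xbar v
      map_add' := fun v w => by ext i j; simp [vecMulVec_apply]; ring
      map_smul' := fun c v => by ext i j; simp [vecMulVec_apply]; ring }
  -- integrability of the centered second-moment integrand
  have hg : @Integrable (Matrix (Fin d) (Fin d) ℝ) _ SeminormedAddGroup.toContinuousENorm _ _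
      (fun x' : Fin d → ℝ => π x' • vecMulVec (x' - Xbar) (x' - Xbar)) volume := by
    have e : (fun x' : Fin d → ℝ => π x' • vecMulVec (x' - Xbar) (x' - Xbar))
        = fun x' => (π x' • vecMulVec x' x' - T1 (π x' • x'))
            - (T2 (π x' • x') - π x' • vecMulVec Xbar Xbar) := by
      funext x'
      show _ = (π x' • vecMulVec x' x' - vecMulVec (π x' • x') Xbar)
            - (vecMulVec Xbar (π x' • x') - π x' • vecMulVec Xbar Xbar)
      ext i j
      simp [vecMulVec_apply]
      ring
    rw [e]
    exact ((h2.sub (T1.integrable_comp h1)).sub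
      ((T2.integrable_comp h1).sub (hπint.smul_const _)))
  -- key identity : C *ᵥ u as an integral
  have key : C *ᵥ u = ∫ x', (π x' * ((x' - Xbar) ⬝ᵥ u)) • (x' - Xbar) := by
    have h := L.integral_comp_comm hg
    have e : (fun x' : Fin d → ℝ => L (π x' • vecMulVec (x' - Xbar) (x' - Xbar)))
        = fun x' => (π x' * ((x' - Xbar) ⬝ᵥ u)) • (x' - Xbar) := by
      funext x'
      rw [_root_.map_smul, hL, vecMulVec_mulVec_aux, smul_smul]
    rw [hC, ← hL, ← e]
    exact h.symm
  -- integrability of the pieces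
  have ef1 : (fun x' : Fin d → ℝ => L (π x' • vecMulVec (x' - Xbar) (x' - Xbar)))
      = fun x' => (π x' * ((x' - Xbar) ⬝ᵥ u)) • (x' - Xbar) := by
    funext x'
    rw [_root_.map_smul, hL, vecMulVec_mulVec_aux, smul_smul]
  have hf1 : Integrable (fun x' : Fin d → ℝ => (π x' * ((x' - Xbar) ⬝ᵥ u)) • (x' - Xbar)) := by
    rw [← ef1]; exact L.integrable_comp hg
  have es : (fun x' : Fin d → ℝ => π x' * ((x' - Xbar) ⬝ᵥ u))
      = fun x' => D (π x' • x') - π x' * (Xbar ⬝ᵥ u) := by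
    funext x'
    rw [hD, smul_dotProduct, sub_dotProduct]
    simp [mul_sub]
  have hs : Integrable (fun x' : Fin d → ℝ => π x' * ((x' - Xbar) ⬝ᵥ u)) := by
    rw [es]; exact (D.integrable_comp h1).sub (hπint.mul_const _)
  have hs0 : (∫ x', π x' * ((x' - Xbar) ⬝ᵥ u)) = 0 := by
    rw [es, integral_sub (D.integrable_comp h1) (hπint.mul_const _),
      D.integral_comp_comm h1, integral_mul_const, hπ1, one_mul, hD, ← hXbar, sub_self]
  -- split the integrand
  have split : (fun x' : Fin d → ℝ =>
        (π x' * ((A *ᵥ (x' - Xbar)) ⬝ᵥ (Γ⁻¹ *ᵥ (A *ᵥ x - y)))) • x')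
      = fun x' => (π x' * ((x' - Xbar) ⬝ᵥ u)) • (x' - Xbar)
          + (π x' * ((x' - Xbar) ⬝ᵥ u)) • Xbar := by
    funext x'
    have hscal : (A *ᵥ (x' - Xbar)) ⬝ᵥ (Γ⁻¹ *ᵥ (A *ᵥ x - y)) = (x' - Xbar) ⬝ᵥ u := by
      rw [hu, Matrix.dotProduct_mulVec (x' - Xbar) Aᵀ (Γ⁻¹ *ᵥ (A *ᵥ x - y)), Matrix.vecMul_transpose]
    rw [hscal, ← smul_add, sub_add_cancel]
  rw [split, integral_add hf1 (hs.smul_const Xbar), integral_smul_const, hs0, zero_smul,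
    add_zero, ← key, hu, Matrix.mulVec_mulVec, Matrix.mulVec_mulVec]
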